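/- Suppose the Fréchet derivative f' is uniformly continuous on C and the stepsizes (γ_k) are chosen by line minimization. Then the sequence (x_k) generated by the Frank–Wolfe algorithm satisfies: (i) f(x_{k+1}) ≤ f(x_k) for all k ≥ 0, and (ii) f(x_k) → f* as k → ∞. -/

import Mathlib

open Filter Topology Set

lemma grad_ineq {X : Type*} [NormedAddCommGroup X] [NormedSpace ℝ X]
    (f : X → ℝ) (f' : X → X →L[ℝ] ℝ)
    (hfconv : ConvexOn ℝ Set.univ f)
    (hfderiv : ∀ x : X, HasFDerivAt f (f' x) x)
    (a b : X) : f' a (b - a) ≤ f b - f a := by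
  set g : ℝ → ℝ := fun t => f (a + t • (b - a)) with hg
  have hline : HasDerivAt (fun t : ℝ => a + t • (b - a)) (b - a) 0 := by
    simpa using ((hasDerivAt_id (0:ℝ)).smul_const (b - a)).const_add a
  have hgd : HasDerivAt g (f' a (b - a)) 0 := by
    have := (hfderiv (a + (0:ℝ) • (b - a))).comp_hasDerivAt 0 hline
    simp only [zero_smul, add_zero] at this
    exact this
  have hslope : Tendsto (slope g 0) (𝓝[>] 0) (𝓝 (f' a (b - a))) :=
    (hasDerivAt_iff_tendsto_slope.mp hgd).mono_left
      (nhdsWithin_mono 0 (fun t ht => ne_of_gt ht))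
  refine le_of_tendsto hslope ?_
  filter_upwards [Ioc_mem_nhdsGT_of_mem (Set.left_mem_Ico.mpr one_pos)] with t ht
  have ht0 : 0 < t := ht.1
  have hcomb : g t ≤ (1 - t) * f a + t * f b := by
    have harg : a + t • (b - a) = (1 - t) • a + t • b := by module
    have h2 := hfconv.2 (Set.mem_univ a) (Set.mem_univ b)
      (by linarith [ht.2] : (0:ℝ) ≤ 1 - t) ht0.le (by ring)
    simp only [smul_eq_mul] at h2
    rw [hg]; dsimp only; rw [harg]; exact h2
  have hg0 : g 0 = f a := by simp [hg]
  rw [slope_def_field, div_le_iff₀ (by simpa using ht0)]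
  simp only [sub_zero, hg0]
  linarith

theorem stmt_2
    {X : Type*} [NormedAddCommGroup X] [NormedSpace ℝ X] [CompleteSpace X]
    (C : Set X) (hCne : C.Nonempty) (hCcl : IsClosed C)
    (hCbd : Bornology.IsBounded C) (hCcv : Convex ℝ C)
    (f : X → ℝ) (f' : X → X →L[ℝ] ℝ)
    (hfconv : ConvexOn ℝ Set.univ f)
    (hfderiv : ∀ x : X, HasFDerivAt f (f' x) x)
    (hfUC : UniformContinuousOn f' C)
    (xstar : X) (hxstarC : xstar ∈ C) (hxstarmin : ∀ y ∈ C, f xstar ≤ f y)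
    (x xbar : ℕ → X) (γ : ℕ → ℝ)
    (hx0 : x 0 ∈ C)
    (hxbarC : ∀ k, xbar k ∈ C)
    (hxbarmin : ∀ k, ∀ y ∈ C, f' (x k) (xbar k) ≤ f' (x k) y)
    (hγ : ∀ k, γ k ∈ Set.Icc (0 : ℝ) 1)
    (hupdate : ∀ k, x (k + 1) = x k + γ k • (xbar k - x k))
    (hlinemin : ∀ k, ∀ γ' ∈ Set.Icc (0 : ℝ) 1,
      f (x k + γ k • (xbar k - x k)) ≤ f (x k + γ' • (xbar k - x k))) :
    (∀ k, f (x (k + 1)) ≤ f (x k)) ∧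
      Tendsto (fun k => f (x k)) atTop (𝓝 (f xstar)) := by
  -- membership of iterates in C
  have hcomb : ∀ (u v : X) (t : ℝ), u ∈ C → v ∈ C → 0 ≤ t → t ≤ 1 →
      u + t • (v - u) ∈ C := by
    intro u v t hu hv h0 h1
    have : (1 - t) • u + t • v ∈ C := hCcv hu hv (by linarith) h0 (by ring)
    have harg : u + t • (v - u) = (1 - t) • u + t • v := by module
    rw [harg]; exact this
  have hmemC : ∀ k, x k ∈ C := by
    intro k
    induction k with
    | zero => exact hx0
    | succ n ih =>
      rw [hupdate n]
      exact hcomb _ _ _ ih (hxbarC n) (hγ n).1 (hγ n).2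
  -- monotone decrease
  have hdec : ∀ k, f (x (k + 1)) ≤ f (x k) := by
    intro k
    rw [hupdate k]
    simpa using hlinemin k 0 ⟨le_refl 0, zero_le_one⟩
  refine ⟨hdec, ?_⟩
  have hanti : Antitone (fun k => f (x k)) := antitone_nat_of_succ_le hdec
  have hbdd : BddBelow (Set.range fun k => f (x k)) := by
    refine ⟨f xstar, ?_⟩
    rintro _ ⟨k, rfl⟩
    exact hxstarmin _ (hmemC k)
  set L := ⨅ k, f (x k) with hL
  have hLt : Tendsto (fun k => f (x k)) atTop (𝓝 L) := tendsto_atTop_ciInf hanti hbdd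
  have hLle : ∀ k, L ≤ f (x k) := fun k => ciInf_le hbdd k
  have hstarL : f xstar ≤ L := le_ciInf fun k => hxstarmin _ (hmemC k)
  suffices hLeq : L = f xstar by rwa [hLeq] at hLt
  by_contra hne
  have hε : 0 < L - f xstar := by
    rcases lt_or_eq_of_le hstarL with h | h
    · linarith
    · exact absurd h.symm hne
  set ε := L - f xstar with hεdef
  -- diameter bound
  obtain ⟨D, hD⟩ := Metric.isBounded_iff.mp hCbd
  have hD0 : 0 ≤ D := by
    obtain ⟨a, ha⟩ := hCne
    simpa using hD ha ha
  -- uniform continuity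
  have hε₁ : 0 < ε / (2 * (D + 1)) := by positivity
  obtain ⟨δ, hδ0, hδ⟩ := Metric.uniformContinuousOn_iff.mp hfUC _ hε₁
  set γ₀ := min 1 (δ / (D + 1)) with hγ₀def
  have hγ₀0 : 0 < γ₀ := lt_min one_pos (by positivity)
  have hγ₀1 : γ₀ ≤ 1 := min_le_left _ _
  have hγ₀δ : γ₀ * D < δ := by
    have h1 : γ₀ ≤ δ / (D + 1) := min_le_right _ _
    have : γ₀ * D ≤ (δ / (D + 1)) * D := by nlinarith
    have h2 : (δ / (D + 1)) * D < δ := by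
      rw [div_mul_eq_mul_div, div_lt_iff₀ (by linarith)]
      nlinarith
    linarith
  -- descent step
  have key : ∀ k, f (x (k + 1)) ≤ f (x k) - γ₀ * (ε / 2) := by
    intro k
    set d := xbar k - x k with hd
    set y := x k + γ₀ • d with hy
    have hyC : y ∈ C := hcomb _ _ _ (hmemC k) (hxbarC k) hγ₀0.le hγ₀1
    have h1 : f (x (k + 1)) ≤ f y := by
      rw [hupdate k]
      exact hlinemin k γ₀ ⟨hγ₀0.le, hγ₀1⟩
    have hnd : ‖d‖ ≤ D := by
      have := hD (hxbarC k) (hmemC k)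
      rwa [dist_eq_norm] at this
    have hdist : dist y (x k) < δ := by
      have : dist y (x k) = γ₀ * ‖d‖ := by
        rw [dist_eq_norm, hy]
        simp [norm_smul, abs_of_pos hγ₀0]
      rw [this]
      calc γ₀ * ‖d‖ ≤ γ₀ * D := by nlinarith
        _ < δ := hγ₀δ
    have hclose : dist (f' y) (f' (x k)) < ε / (2 * (D + 1)) :=
      hδ y hyC (x k) (hmemC k) hdist
    -- bound on f'(x k) d
    have hb1 : f' (x k) d ≤ -ε := by
      have e1 : f' (x k) d = f' (x k) (xbar k) - f' (x k) (x k) := by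
        rw [hd, map_sub]
      have e2 : f' (x k) (xbar k) ≤ f' (x k) xstar := hxbarmin k xstar hxstarC
      have e3 : f' (x k) (xstar - x k) ≤ f xstar - f (x k) :=
        grad_ineq f f' hfconv hfderiv (x k) xstar
      rw [map_sub] at e3
      have e4 : f xstar - f (x k) ≤ -ε := by
        have := hLle k; rw [hεdef]; linarith
      linarith [e1, e2, e3, e4]
    -- bound on difference term
    have hb2 : (f' y - f' (x k)) d ≤ ε / 2 := by
      have h1' : (f' y - f' (x k)) d ≤ ‖f' y - f' (x k)‖ * ‖d‖ :=
        le_trans (le_abs_self _) ((f' y - f' (x k)).le_opNorm d)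
      have h2' : ‖f' y - f' (x k)‖ < ε / (2 * (D + 1)) := by
        rwa [dist_eq_norm] at hclose
      have h3' : ‖f' y - f' (x k)‖ * ‖d‖ ≤ (ε / (2 * (D + 1))) * D := by
        apply mul_le_mul h2'.le hnd (norm_nonneg _) (le_of_lt hε₁)
      have h4' : (ε / (2 * (D + 1))) * D ≤ ε / 2 := by
        rw [div_mul_eq_mul_div, div_le_div_iff₀ (by linarith) (by norm_num)]
        nlinarith
      linarith
    have hfyd : f' y d ≤ -(ε / 2) := by
      have : f' y d = f' (x k) d + (f' y - f' (x k)) d := by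
        simp
      rw [this]; linarith
    -- gradient inequality at y gives bound on f y
    have hgy : f' y (x k - y) ≤ f (x k) - f y :=
      grad_ineq f f' hfconv hfderiv y (x k)
    have hxky : x k - y = -(γ₀ • d) := by rw [hy]; abel
    rw [hxky, map_neg, map_smul, smul_eq_mul] at hgy
    have : f y ≤ f (x k) + γ₀ * f' y d := by linarith
    calc f (x (k + 1)) ≤ f y := h1
      _ ≤ f (x k) + γ₀ * f' y d := this
      _ ≤ f (x k) + γ₀ * (-(ε / 2)) := by nlinarith
      _ = f (x k) - γ₀ * (ε / 2) := by ring
  -- iterate the descent to a contradiction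
  have hiter : ∀ n : ℕ, f (x n) ≤ f (x 0) - n * (γ₀ * (ε / 2)) := by
    intro n
    induction n with
    | zero => simp
    | succ m ih =>
      have := key m
      push_cast
      push_cast at ih
      linarith
  have hc : 0 < γ₀ * (ε / 2) := by positivity
  obtain ⟨n, hn⟩ := exists_nat_gt ((f (x 0) - f xstar) / (γ₀ * (ε / 2)))
  have hn' : f (x 0) - f xstar < n * (γ₀ * (ε / 2)) := by
    rwa [div_lt_iff₀ hc] at hn
  have := hxstarmin _ (hmemC n)
  linarith [hiter n]
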